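/- Let C be an (N,v,t)-suitable core with v ≤ t+2, let k ∈ [v] occur as the first symbol of a row of C exactly t+2−v times, and let i, j ∈ [v] be two distinct symbols, both different from k. If no row of C starts with the two symbols i,k (in that order) and no row starts with j,k (in that order), then there is at least one row of C that starts with the three symbols i,j,k or with j,i,k (in those orders). -/

import Mathlib

/-- An `(N,v,t)`-suitable core: an `N × v` array, each of whose rows is a
permutation of `{1,…,v}` (modelled as `Fin v`, with `C i p` the symbol in
position `p` of row `i`), such that for every `s` with `0 ≤ s ≤ t-1`, every
symbol precedes every subset of `s` other symbols in at least `t - s` rows. -/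
def IsSuitableCore (N v t : ℕ) (C : Fin N → Equiv.Perm (Fin v)) : Prop :=
  ∀ s : ℕ, s < t → ∀ σ : Fin v, ∀ S : Finset (Fin v), σ ∉ S → S.card = s →
    t - s ≤ (Finset.univ.filter
      (fun i : Fin N => ∀ τ ∈ S, ((C i).symm σ : ℕ) < ((C i).symm τ : ℕ))).card

/-- In an `(N,v,t)`-suitable core with `v ≤ t + 2`, if `k` starts a row exactly
`t + 2 - v` times, `i, j, k` are pairwise distinct, and no row starts with
`i k` or with `j k`, then some row starts with `i j k` or with `j i k`. -/
theorem suitableCore_exists_row_start_triple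
    (N v t : ℕ) (hN : 0 < N) (hv : 0 < v) (ht : 0 < t) (hvt : v ≤ t + 2)
    (C : Fin N → Equiv.Perm (Fin v)) (hC : IsSuitableCore N v t C)
    (k i j : Fin v) (hik : i ≠ k) (hjk : j ≠ k) (hij : i ≠ j)
    (hk : (Finset.univ.filter (fun r : Fin N => ((C r).symm k : ℕ) = 0)).card = t + 2 - v)
    (hik' : ¬ ∃ r : Fin N, ((C r).symm i : ℕ) = 0 ∧ ((C r).symm k : ℕ) = 1)
    (hjk' : ¬ ∃ r : Fin N, ((C r).symm j : ℕ) = 0 ∧ ((C r).symm k : ℕ) = 1) :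
    ∃ r : Fin N,
      (((C r).symm i : ℕ) = 0 ∧ ((C r).symm j : ℕ) = 1 ∧ ((C r).symm k : ℕ) = 2) ∨
      (((C r).symm j : ℕ) = 0 ∧ ((C r).symm i : ℕ) = 1 ∧ ((C r).symm k : ℕ) = 2) := by
  by_contra hgoal
  push_neg at hgoal
  have hv3 : 3 ≤ v := by
    have h1 : ({i, j, k} : Finset (Fin v)).card = 3 := by
      rw [Finset.card_insert_of_notMem (by simp [hij, hik]),
        Finset.card_insert_of_notMem (by simp [hjk])]
      simp
    have h2 := Finset.card_le_univ ({i, j, k} : Finset (Fin v))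
    simpa [h1] using h2
  set S : Finset (Fin v) := Finset.univ \ {i, j, k} with hS
  have hkS : k ∉ S := by simp [hS]
  have hScard : S.card = v - 3 := by
    rw [hS, Finset.card_sdiff_of_subset (Finset.subset_univ _)]
    rw [Finset.card_univ, Fintype.card_fin,
      Finset.card_insert_of_notMem (by simp [hij, hik]),
      Finset.card_insert_of_notMem (by simp [hjk]), Finset.card_singleton]
  have hs : v - 3 < t := by omega
  set A : Finset (Fin N) := Finset.univ.filter
      (fun r : Fin N => ∀ τ ∈ S, ((C r).symm k : ℕ) < ((C r).symm τ : ℕ)) with hAdef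
  have hA : t - (v - 3) ≤ A.card := hC (v - 3) hs k S hkS hScard
  set A0 : Finset (Fin N) := Finset.univ.filter
      (fun r : Fin N => ((C r).symm k : ℕ) = 0) with hA0
  have hsub : A ⊆ A0 := by
    intro r hr
    simp only [hAdef, Finset.mem_filter, Finset.mem_univ, true_and] at hr
    simp only [hA0, Finset.mem_filter, Finset.mem_univ, true_and]
    have key : ∀ q : Fin v, (q : ℕ) < ((C r).symm k : ℕ) → C r q = i ∨ C r q = j := by
      intro q hq
      have hsq : (C r).symm (C r q) = q := Equiv.symm_apply_apply _ _
      by_contra hcon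
      push_neg at hcon
      by_cases hmem : C r q ∈ S
      · have := hr _ hmem
        rw [hsq] at this
        omega
      · have hk' : C r q = k := by
          simp only [hS, Finset.mem_sdiff, Finset.mem_univ, true_and, not_not,
            Finset.mem_insert, Finset.mem_singleton] at hmem
          tauto
        rw [hk'] at hsq
        rw [hsq] at hq
        omega
    rcases Nat.lt_or_ge ((C r).symm k : ℕ) 1 with h0 | h1
    · omega
    rcases Nat.lt_or_ge ((C r).symm k : ℕ) 2 with h1' | h2
    · -- k at position 1: row starts with i k or j k, contradiction
      have hp1 : ((C r).symm k : ℕ) = 1 := by omega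
      have h0v : (0 : ℕ) < v := hv
      have hq0 := key ⟨0, h0v⟩ (by exact h1)
      rcases hq0 with h | h
      · exact absurd ⟨r, by rw [← h, Equiv.symm_apply_apply], hp1⟩ hik'
      · exact absurd ⟨r, by rw [← h, Equiv.symm_apply_apply], hp1⟩ hjk'
    · -- k at position ≥ 2
      exfalso
      have h0v : (0 : ℕ) < v := hv
      have h1v : (1 : ℕ) < v := by omega
      have hq0 := key ⟨0, h0v⟩ (by simp; omega)
      have hq1 := key ⟨1, h1v⟩ (by simp; omega)
      have hne : C r ⟨0, h0v⟩ ≠ C r ⟨1, h1v⟩ := by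
        intro h
        have := (C r).injective h
        simp [Fin.ext_iff] at this
      rcases Nat.lt_or_ge ((C r).symm k : ℕ) 3 with h2' | h3
      · -- k at position exactly 2: contradicts hgoal
        have hp2 : ((C r).symm k : ℕ) = 2 := by omega
        rcases hq0 with h0' | h0' <;> rcases hq1 with h1'' | h1''
        · exact hne (h0'.trans h1''.symm)
        · exact (hgoal r).1 (by rw [← h0', Equiv.symm_apply_apply])
            (by rw [← h1'', Equiv.symm_apply_apply]) hp2
        · exact (hgoal r).2 (by rw [← h0', Equiv.symm_apply_apply])
            (by rw [← h1'', Equiv.symm_apply_apply]) hp2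
        · exact hne (h0'.trans h1''.symm)
      · -- k at position ≥ 3: three distinct symbols among {i,j}
        have h2v : (2 : ℕ) < v := by omega
        have hq2 := key ⟨2, h2v⟩ (by simp; omega)
        have hne02 : C r ⟨0, h0v⟩ ≠ C r ⟨2, h2v⟩ := by
          intro h
          have := (C r).injective h
          simp [Fin.ext_iff] at this
        have hne12 : C r ⟨1, h1v⟩ ≠ C r ⟨2, h2v⟩ := by
          intro h
          have := (C r).injective h
          simp [Fin.ext_iff] at this
        rcases hq0 with h0' | h0' <;> rcases hq1 with h1'' | h1'' <;>
          rcases hq2 with h2'' | h2''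
        all_goals first
          | exact hne (h0'.trans h1''.symm)
          | exact hne02 (h0'.trans h2''.symm)
          | exact hne12 (h1''.trans h2''.symm)
  have hcard := Finset.card_le_card hsub
  omega
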